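/- Let N ⊆ v* be a context-free language over Σ, where v is a fixed nonempty word, and suppose N is infinite. Then N contains an infinite regular subset; specifically there exist m ≥ 0 and k ≥ 1 such that { v^{m} (v^{k})^{n} : n ≥ 0 } ⊆ N. -/

import Mathlib

open ContextFreeGrammar Symbol

namespace CFPump

open scoped Classical

variable {T : Type*} {g : ContextFreeGrammar T}

mutual
inductive DS (g : ContextFreeGrammar T) : Symbol T g.NT → List T → ℕ → Finset g.NT → Prop
  | term (t : T) : DS g (Symbol.terminal t) [t] 1 ∅
  | node {r : ContextFreeRule T g.NT} (hr : r ∈ g.rules) {w : List T} {n : ℕ} {F : Finset g.NT}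
      (h : DL g r.output w n F) :
      DS g (Symbol.nonterminal r.input) w (n + 1) (insert r.input F)

inductive DL (g : ContextFreeGrammar T) : List (Symbol T g.NT) → List T → ℕ → Finset g.NT → Prop
  | nil : DL g [] [] 0 ∅
  | cons {s : Symbol T g.NT} {w₁ : List T} {n₁ : ℕ} {F₁ : Finset g.NT}
      {l : List (Symbol T g.NT)} {w₂ : List T} {n₂ : ℕ} {F₂ : Finset g.NT}
      (h : DS g s w₁ n₁ F₁) (h' : DL g l w₂ n₂ F₂) :
      DL g (s :: l) (w₁ ++ w₂) (n₁ + n₂) (F₁ ∪ F₂)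
end

def Dp (g : ContextFreeGrammar T) (s : Symbol T g.NT) (w : List T) (n : ℕ) : Prop :=
  ∃ F, DS g s w n F

def DLp (g : ContextFreeGrammar T) (l : List (Symbol T g.NT)) (w : List T) (n : ℕ) : Prop :=
  ∃ F, DL g l w n F

lemma DS.one_le {s w n F} (h : DS g s w n F) : 1 ≤ n := by
  cases h <;> omega

lemma DLp.singleton {s : Symbol T g.NT} {w n} (h : Dp g s w n) : DLp g [s] w n := by
  obtain ⟨F, h⟩ := h
  exact ⟨F ∪ ∅, by simpa using DL.cons h DL.nil⟩

lemma DLp.of_singleton {s : Symbol T g.NT} {w n} (h : DLp g [s] w n) : Dp g s w n := by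
  obtain ⟨F, h⟩ := h
  cases h with
  | cons h h' => cases h' ; simpa using ⟨_, h⟩

lemma DLp.append {l₁ l₂ : List (Symbol T g.NT)} {w₁ w₂ n₁ n₂}
    (h₁ : DLp g l₁ w₁ n₁) (h₂ : DLp g l₂ w₂ n₂) : DLp g (l₁ ++ l₂) (w₁ ++ w₂) (n₁ + n₂) := by
  induction l₁ generalizing w₁ n₁ with
  | nil =>
      obtain ⟨F₁, h₁⟩ := h₁
      cases h₁
      simpa using h₂
  | cons s l ih =>
      obtain ⟨F₁, h₁⟩ := h₁
      cases h₁ with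
      | cons hs hl =>
          obtain ⟨F, h⟩ := ih ⟨_, hl⟩
          exact ⟨_ ∪ F, by simpa [List.append_assoc, Nat.add_assoc] using DL.cons hs h⟩

lemma DLp.split {l₁ l₂ : List (Symbol T g.NT)} {w : List T} {n : ℕ}
    (h : DLp g (l₁ ++ l₂) w n) :
    ∃ w₁ w₂ n₁ n₂, w = w₁ ++ w₂ ∧ n = n₁ + n₂ ∧ DLp g l₁ w₁ n₁ ∧ DLp g l₂ w₂ n₂ := by
  induction l₁ generalizing w n with
  | nil => exact ⟨[], w, 0, n, by simp, by simp, ⟨∅, DL.nil⟩, h⟩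
  | cons s l ih =>
      obtain ⟨F, h⟩ := h
      cases h with
      | cons hs hl =>
          obtain ⟨w₁, w₂, m₁, m₂, rfl, rfl, hl₁, hl₂⟩ := ih ⟨_, hl⟩
          obtain ⟨F₁, hl₁⟩ := hl₁
          exact ⟨_ ++ w₁, w₂, _ + m₁, m₂, by simp, by omega,
            ⟨_, DL.cons hs hl₁⟩, hl₂⟩

lemma Derives.append {l₁ l₂ u₁ u₂ : List (Symbol T g.NT)}
    (h₁ : g.Derives l₁ u₁) (h₂ : g.Derives l₂ u₂) : g.Derives (l₁ ++ l₂) (u₁ ++ u₂) :=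
  (h₁.append_right l₂).trans (h₂.append_left u₁)

lemma nodeD {r : ContextFreeRule T g.NT} (hr : r ∈ g.rules) {w n}
    (h : DLp g r.output w n) : Dp g (Symbol.nonterminal r.input) w (n + 1) := by
  obtain ⟨F, h⟩ := h
  exact ⟨_, DS.node hr h⟩

lemma sound_aux (k : ℕ) :
    (∀ s w n F, 2 * n = k → DS g s w n F → g.Derives [s] (w.map Symbol.terminal)) ∧
    (∀ l w n F, 2 * n + 1 = k → DL g l w n F → g.Derives l (w.map Symbol.terminal)) := by
  induction k using Nat.strong_induction_on with
  | _ k ih =>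
    constructor
    · rintro s w n F hk h
      cases h with
      | term t => exact Relation.ReflTransGen.refl
      | node hr h =>
          have h2 := (ih (2 * _ + 1) (by omega)).2 _ _ _ _ rfl h
          exact (Produces.single ⟨_, hr, ContextFreeRule.Rewrites.input_output⟩).trans h2
    · rintro l w n F hk h
      cases h with
      | nil => exact Relation.ReflTransGen.refl
      | @cons s w₁ n₁ F₁ l' w₂ n₂ F₂ hs hl =>
          have hn₁ : 1 ≤ n₁ := hs.one_le
          have h1 := (ih (2 * n₁) (by omega)).1 _ _ _ _ rfl hs
          have h2 := (ih (2 * n₂ + 1) (by omega)).2 _ _ _ _ rfl hl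
          have := Derives.append h1 h2
          simpa using this

lemma Dp.sound {s w n} (h : Dp g s w n) : g.Derives [s] (w.map Symbol.terminal) := by
  obtain ⟨F, h⟩ := h
  exact (sound_aux (2 * n)).1 _ _ _ _ rfl h

lemma complete_base (w : List T) : DLp g (w.map Symbol.terminal) w w.length := by
  induction w with
  | nil => exact ⟨∅, DL.nil⟩
  | cons t w ih =>
      obtain ⟨F, ih⟩ := ih
      exact ⟨_, by simpa [Nat.add_comm] using DL.cons (DS.term t) ih⟩

lemma complete {l : List (Symbol T g.NT)} {w : List T}
    (h : g.Derives l (w.map Symbol.terminal)) : ∃ n, DLp g l w n := by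
  induction h using Relation.ReflTransGen.head_induction_on with
  | refl => exact ⟨_, complete_base w⟩
  | head hp _ ih =>
      obtain ⟨n, hn⟩ := ih
      obtain ⟨r, hr, hrw⟩ := hp
      obtain ⟨p, q, rfl, rfl⟩ := hrw.exists_parts
      rw [List.append_assoc] at hn
      obtain ⟨w₁, w₂, n₁, n₂, rfl, rfl, hp1, hp2⟩ := DLp.split hn
      obtain ⟨w₂₁, w₂₂, m₁, m₂, rfl, rfl, hq1, hq2⟩ := DLp.split hp2
      have := DLp.append hp1 ((DLp.singleton (nodeD hr hq1)).append hq2)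
      exact ⟨_, by simpa [List.append_assoc] using this⟩

lemma extract_aux (k : ℕ) :
    (∀ s w n F, 2 * n = k → DS g s w n F → ∀ X ∈ F,
      ∃ a b t nd n₂, w = a ++ t ++ b ∧ nd + n₂ ≤ n ∧ Dp g (Symbol.nonterminal X) t n₂ ∧
        ∀ u m, Dp g (Symbol.nonterminal X) u m → Dp g s (a ++ u ++ b) (nd + m)) ∧
    (∀ l w n F, 2 * n + 1 = k → DL g l w n F → ∀ X ∈ F,
      ∃ a b t nd n₂, w = a ++ t ++ b ∧ nd + n₂ ≤ n ∧ Dp g (Symbol.nonterminal X) t n₂ ∧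
        ∀ u m, Dp g (Symbol.nonterminal X) u m → DLp g l (a ++ u ++ b) (nd + m)) := by
  induction k using Nat.strong_induction_on with
  | _ k ih =>
    constructor
    · rintro s w n F hk h X hX
      cases h with
      | term t => simp at hX
      | @node r hr w n F h =>
          rcases Finset.mem_insert.mp hX with hXr | hXF
          · subst hXr
            exact ⟨[], [], w, 0, n + 1, by simp, by omega, ⟨_, DS.node hr h⟩,
              fun u m hu => by simpa using hu⟩
          · obtain ⟨a, b, t, nd, n₂, rfl, hle, ht, hctx⟩ :=
              (ih (2 * n + 1) (by omega)).2 _ _ _ _ rfl h X hXF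
            exact ⟨a, b, t, nd + 1, n₂, rfl, by omega, ht,
              fun u m hu => by simpa [Nat.add_right_comm] using nodeD hr (hctx u m hu)⟩
    · rintro l w n F hk h X hX
      cases h with
      | nil => simp at hX
      | @cons s w₁ n₁ F₁ l' w₂ n₂ F₂ hs hl =>
          have hn₁ : 1 ≤ n₁ := hs.one_le
          rcases Finset.mem_union.mp hX with hX1 | hX2
          · obtain ⟨a, b, t, nd, ni, rfl, hle, ht, hctx⟩ :=
              (ih (2 * n₁) (by omega)).1 _ _ _ _ rfl hs X hX1
            refine ⟨a, b ++ w₂, t, nd + n₂, ni, by simp, by omega, ht, fun u m hu => ?_⟩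
            have := (DLp.singleton (hctx u m hu)).append (l₂ := l') ⟨_, hl⟩
            simpa [List.append_assoc, Nat.add_assoc, Nat.add_comm, Nat.add_left_comm] using this
          · obtain ⟨a, b, t, nd, ni, rfl, hle, ht, hctx⟩ :=
              (ih (2 * n₂ + 1) (by omega)).2 _ _ _ _ rfl hl X hX2
            refine ⟨w₁ ++ a, b, t, n₁ + nd, ni, by simp, by omega, ht, fun u m hu => ?_⟩
            have := (DLp.singleton (⟨_, hs⟩ : Dp g s w₁ n₁)).append (hctx u m hu)
            simpa [List.append_assoc, Nat.add_assoc] using this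

/-- Max length of a rule output, plus one. -/
noncomputable def C (g : ContextFreeGrammar T) : ℕ :=
  (g.rules.sup fun r => r.output.length) + 1

lemma one_le_C : 1 ≤ C g := Nat.le_add_left 1 _

lemma output_length_le_C {r : ContextFreeRule T g.NT} (hr : r ∈ g.rules) :
    r.output.length ≤ C g :=
  le_trans (Finset.le_sup (f := fun r => r.output.length) hr) (Nat.le_succ _)

def Pump (g : ContextFreeGrammar T) (s : Symbol T g.NT) (w : List T) (n : ℕ) : Prop :=
  ∃ (X : g.NT) (α a t b ω : List T) (nc nd n₂ : ℕ),
    w = α ++ a ++ t ++ b ++ ω ∧ nc + nd + n₂ ≤ n ∧ 1 ≤ nd ∧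
    Dp g (Symbol.nonterminal X) t n₂ ∧
    (∀ u m, Dp g (Symbol.nonterminal X) u m →
      Dp g (Symbol.nonterminal X) (a ++ u ++ b) (nd + m)) ∧
    (∀ u m, Dp g (Symbol.nonterminal X) u m → Dp g s (α ++ u ++ ω) (nc + m))

def PumpL (g : ContextFreeGrammar T) (l : List (Symbol T g.NT)) (w : List T) (n : ℕ) : Prop :=
  ∃ (X : g.NT) (α a t b ω : List T) (nc nd n₂ : ℕ),
    w = α ++ a ++ t ++ b ++ ω ∧ nc + nd + n₂ ≤ n ∧ 1 ≤ nd ∧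
    Dp g (Symbol.nonterminal X) t n₂ ∧
    (∀ u m, Dp g (Symbol.nonterminal X) u m →
      Dp g (Symbol.nonterminal X) (a ++ u ++ b) (nd + m)) ∧
    (∀ u m, Dp g (Symbol.nonterminal X) u m → DLp g l (α ++ u ++ ω) (nc + m))

lemma dich_aux (k : ℕ) :
    (∀ s w n F, 2 * n = k → DS g s w n F →
      w.length ≤ C g ^ F.card ∨ Pump g s w n) ∧
    (∀ l w n F, 2 * n + 1 = k → DL g l w n F →
      w.length ≤ l.length * C g ^ F.card ∨ PumpL g l w n) := by
  induction k using Nat.strong_induction_on with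
  | _ k ih =>
    constructor
    · rintro s w n F hk h
      cases h with
      | term t => left; simp
      | @node r hr w n F h =>
          by_cases hX : r.input ∈ F
          · -- repeat found at the root
            obtain ⟨a, b, t, nd, n₂, rfl, hle, ht, hctx⟩ :=
              (extract_aux (2 * n + 1)).2 _ _ _ _ rfl h r.input hX
            right
            refine ⟨r.input, [], a, t, b, [], 0, nd + 1, n₂, by simp, by omega, by omega, ht,
              fun u m hu => by simpa [Nat.add_right_comm] using nodeD hr (hctx u m hu),
              fun u m hu => by simpa using hu⟩
          · rcases (ih (2 * n + 1) (by omega)).2 _ _ _ _ rfl h with hb | hp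
            · left
              calc w.length ≤ r.output.length * C g ^ F.card := hb
                _ ≤ C g * C g ^ F.card := by
                    exact Nat.mul_le_mul_right _ (output_length_le_C hr)
                _ ≤ C g * C g ^ ((insert r.input F).card - 1) := by
                    have hcard : F.card ≤ (insert r.input F).card - 1 := by
                      rw [Finset.card_insert_of_notMem hX]; omega
                    exact Nat.mul_le_mul_left _ (Nat.pow_le_pow_right one_le_C hcard)
                _ = C g ^ (insert r.input F).card := by
                    rw [← Nat.pow_succ']
                    congr 1
                    have : 1 ≤ (insert r.input F).card := Finset.card_pos.mpr ⟨_, Finset.mem_insert_self _ _⟩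
                    omega
            · right
              obtain ⟨X, α, a, t, b, ω, nc, nd, n₂, rfl, hle, hnd, ht, hictx, hoctx⟩ := hp
              exact ⟨X, α, a, t, b, ω, nc + 1, nd, n₂, rfl, by omega, hnd, ht, hictx,
                fun u m hu => by simpa [Nat.add_right_comm] using nodeD hr (hoctx u m hu)⟩
    · rintro l w n F hk h
      cases h with
      | nil => left; simp
      | @cons s w₁ n₁ F₁ l' w₂ n₂ F₂ hs hl =>
          have hn₁ : 1 ≤ n₁ := hs.one_le
          rcases (ih (2 * n₁) (by omega)).1 _ _ _ _ rfl hs with hb1 | hp1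
          · rcases (ih (2 * n₂ + 1) (by omega)).2 _ _ _ _ rfl hl with hb2 | hp2
            · left
              have e1 : C g ^ F₁.card ≤ C g ^ (F₁ ∪ F₂).card :=
                Nat.pow_le_pow_right one_le_C (Finset.card_le_card Finset.subset_union_left)
              have e2 : C g ^ F₂.card ≤ C g ^ (F₁ ∪ F₂).card :=
                Nat.pow_le_pow_right one_le_C (Finset.card_le_card Finset.subset_union_right)
              have : (w₁ ++ w₂).length = w₁.length + w₂.length := List.length_append
              rw [this]
              calc w₁.length + w₂.length
                  ≤ C g ^ (F₁ ∪ F₂).card + l'.length * C g ^ (F₁ ∪ F₂).card := by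
                    have := le_trans hb2 (Nat.mul_le_mul_left _ e2)
                    omega
                _ = (s :: l').length * C g ^ (F₁ ∪ F₂).card := by
                    simp [Nat.succ_mul, Nat.add_comm]
            · right
              obtain ⟨X, α, a, t, b, ω, nc, nd, ni, rfl, hle, hnd, ht, hictx, hoctx⟩ := hp2
              refine ⟨X, w₁ ++ α, a, t, b, ω, n₁ + nc, nd, ni, by simp, by omega, hnd, ht, hictx,
                fun u m hu => ?_⟩
              have := (DLp.singleton (⟨_, hs⟩ : Dp g s w₁ n₁)).append (hoctx u m hu)
              simpa [List.append_assoc, Nat.add_assoc, Nat.add_comm, Nat.add_left_comm] using this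
          · right
            obtain ⟨X, α, a, t, b, ω, nc, nd, ni, rfl, hle, hnd, ht, hictx, hoctx⟩ := hp1
            refine ⟨X, α, a, t, b, ω ++ w₂, nc + n₂, nd, ni, by simp, by omega, hnd, ht, hictx,
              fun u m hu => ?_⟩
            have := (DLp.singleton (hoctx u m hu)).append (l₂ := l') ⟨_, hl⟩
            simpa [List.append_assoc, Nat.add_assoc, Nat.add_comm, Nat.add_left_comm] using this

lemma F_subset_aux (k : ℕ) :
    (∀ s w n F, 2 * n = k → DS g s w n F → F ⊆ g.rules.image (fun r => r.input)) ∧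
    (∀ l w n F, 2 * n + 1 = k → DL g l w n F → F ⊆ g.rules.image (fun r => r.input)) := by
  induction k using Nat.strong_induction_on with
  | _ k ih =>
    constructor
    · rintro s w n F hk h
      cases h with
      | term t => simp
      | @node r hr w n F h =>
          exact Finset.insert_subset (Finset.mem_image_of_mem _ hr)
            ((ih (2 * n + 1) (by omega)).2 _ _ _ _ rfl h)
    · rintro l w n F hk h
      cases h with
      | nil => simp
      | @cons s w₁ n₁ F₁ l' w₂ n₂ F₂ hs hl =>
          have hn₁ : 1 ≤ n₁ := hs.one_le
          exact Finset.union_subset ((ih (2 * n₁) (by omega)).1 _ _ _ _ rfl hs)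
            ((ih (2 * n₂ + 1) (by omega)).2 _ _ _ _ rfl hl)

lemma Dp.cast {s : Symbol T g.NT} {w w' : List T} {n n' : ℕ}
    (h : Dp g s w n) (hw : w = w') (hn : n = n') : Dp g s w' n' := hw ▸ hn ▸ h

lemma flatten_replicate_length (q : ℕ) (x : List T) :
    ((List.replicate q x).flatten).length = q * x.length := by
  induction q with
  | zero => simp
  | succ q ih => simp [List.replicate_succ, ih, Nat.succ_mul, Nat.add_comm]

lemma pump_iter {X : g.NT} {a b t : List T} {n₂ nd : ℕ}
    (ht : Dp g (Symbol.nonterminal X) t n₂)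
    (hictx : ∀ u m, Dp g (Symbol.nonterminal X) u m →
      Dp g (Symbol.nonterminal X) (a ++ u ++ b) (nd + m)) :
    ∀ q, Dp g (Symbol.nonterminal X)
      ((List.replicate q a).flatten ++ t ++ (List.replicate q b).flatten) (nd * q + n₂) := by
  intro q
  induction q with
  | zero => simpa using ht
  | succ q ihq =>
      have hb' : (List.replicate (q + 1) b).flatten = (List.replicate q b).flatten ++ b := by
        rw [List.replicate_succ']; simp
      have := hictx _ _ ihq
      refine this.cast ?_ (by ring)
      rw [hb', List.replicate_succ]
      simp [List.append_assoc]

end CFPump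

/-- If `N ⊆ v*` is an infinite context-free language (with `v` nonempty), then there exist
`m ≥ 0` and `k ≥ 1` with `{ v^m (v^k)^n : n ≥ 0 } ⊆ N`. -/
theorem cf_subset_of_powers_contains_arithmetic_progression {A : Type*} [Fintype A]
    (v : List A) (hv : v ≠ [])
    (N : Language A) (hN : N.IsContextFree)
    (hNv : ∀ w ∈ N, ∃ j : ℕ, w = (List.replicate j v).flatten)
    (hNinf : Set.Infinite (N : Set (List A))) :
    ∃ m k : ℕ, 1 ≤ k ∧ ∀ n : ℕ, (List.replicate (m + k * n) v).flatten ∈ N := by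
  classical
  open CFPump in
  obtain ⟨g, hg⟩ := hN
  subst hg
  set B := C g ^ (g.rules.image (fun r => r.input)).card with hB
  -- find a long word in the language
  have hlong : ∃ w, w ∈ g.language ∧ B < w.length := by
    by_contra hcon
    push_neg at hcon
    exact hNinf ((List.finite_length_le A B).subset fun w hw => hcon w hw)
  obtain ⟨w, hwN, hwlen⟩ := hlong
  have hder : g.Derives [Symbol.nonterminal g.initial] (w.map Symbol.terminal) := hwN
  obtain ⟨n₀, hDL⟩ := CFPump.complete hder
  have hEx : ∃ n, CFPump.Dp g (Symbol.nonterminal g.initial) w n := ⟨n₀, CFPump.DLp.of_singleton hDL⟩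
  obtain ⟨F, hDS⟩ := Nat.find_spec hEx
  rcases (CFPump.dich_aux (2 * Nat.find hEx)).1 _ _ _ _ rfl hDS with hb | hp
  · exfalso
    have : C g ^ F.card ≤ B :=
      Nat.pow_le_pow_right CFPump.one_le_C
        (Finset.card_le_card ((CFPump.F_subset_aux (2 * Nat.find hEx)).1 _ _ _ _ rfl hDS))
    omega
  obtain ⟨X, α, a, t, b, ω, nc, nd, n₂, hw, hle, hnd, ht, hictx, hoctx⟩ := hp
  -- the pumped part is nonempty
  have hab : a.length + b.length ≠ 0 := by
    intro h0
    have ha : a = [] := List.eq_nil_of_length_eq_zero (by omega)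
    have hbnil : b = [] := List.eq_nil_of_length_eq_zero (by omega)
    have : CFPump.Dp g (Symbol.nonterminal g.initial) w (nc + n₂) := by
      have := hoctx t n₂ ht
      refine this.cast ?_ rfl
      rw [hw, ha, hbnil]; simp
    exact Nat.find_min hEx (show nc + n₂ < Nat.find hEx by omega) this
  -- pumped words are all in the language
  have hiter := CFPump.pump_iter ht hictx
  have hmem : ∀ q : ℕ,
      (α ++ (List.replicate q a).flatten ++ t ++ (List.replicate q b).flatten ++ ω)
        ∈ g.language := by
    intro q
    have h1 := hoctx _ _ (hiter q)
    have h2 : CFPump.Dp g (Symbol.nonterminal g.initial)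
        (α ++ (List.replicate q a).flatten ++ t ++ (List.replicate q b).flatten ++ ω)
        (nc + (nd * q + n₂)) :=
      h1.cast (by simp [List.append_assoc]) rfl
    exact (ContextFreeGrammar.mem_language_iff g _).mpr h2.sound
  choose j hjeq using fun q => hNv _ (hmem q)
  have hvpos : 0 < v.length := List.length_pos_iff.mpr hv
  have hL : ∀ q : ℕ, j q * v.length
      = (α.length + t.length + ω.length) + (q * a.length + q * b.length) := by
    intro q
    have h1 := congrArg List.length (hjeq q)
    simp only [List.length_append, CFPump.flatten_replicate_length] at h1
    generalize q * a.length = qa at h1 ⊢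
    generalize q * b.length = qb at h1 ⊢
    generalize j q * v.length = J at h1 ⊢
    omega
  have h0 := hL 0
  have h1 := hL 1
  simp only [Nat.zero_mul, Nat.one_mul, Nat.add_zero] at h0 h1
  have hj01 : j 0 ≤ j 1 := by
    refine Nat.le_of_mul_le_mul_right ?_ hvpos
    generalize j 0 * v.length = u0 at h0 ⊢
    generalize j 1 * v.length = u1 at h1 ⊢
    omega
  have hkd : (j 1 - j 0) * v.length = a.length + b.length := by
    rw [Nat.sub_mul]
    generalize j 0 * v.length = u0 at h0 ⊢
    generalize j 1 * v.length = u1 at h1 ⊢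
    omega
  have hk1 : 1 ≤ j 1 - j 0 := by
    rcases Nat.eq_zero_or_pos (j 1 - j 0) with h | h
    · rw [h, Nat.zero_mul] at hkd; omega
    · exact h
  have hjq : ∀ q, j q = j 0 + (j 1 - j 0) * q := by
    intro q
    have hq := hL q
    refine Nat.eq_of_mul_eq_mul_right hvpos ?_
    rw [Nat.add_mul]
    have hx : (j 1 - j 0) * q * v.length = q * a.length + q * b.length := by
      rw [Nat.mul_comm (j 1 - j 0) q, Nat.mul_assoc, hkd, Nat.mul_add]
    generalize hg1 : q * a.length = qa at hq hx
    generalize hg2 : q * b.length = qb at hq hx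
    generalize j q * v.length = J at hq ⊢
    generalize j 0 * v.length = u0 at h0 ⊢
    generalize (j 1 - j 0) * q * v.length = P at hx ⊢
    omega
  refine ⟨j 0, j 1 - j 0, hk1, fun n => ?_⟩
  have heq : (List.replicate (j 0 + (j 1 - j 0) * n) v).flatten
      = α ++ (List.replicate n a).flatten ++ t ++ (List.replicate n b).flatten ++ ω := by
    rw [← hjq n, ← hjeq n]
  rw [heq]
  exact hmem n
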